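/- For every w ∈ W and every λ ∈ V_ℂ such that α̂(λ) ≠ 0 and ρ(α̂(λ)) ≠ 0 for every coroot α̂ ∈ R̂, the following identity holds: c(−wλ) · r(λ)/r(wλ) = ∏_{α̂ ∈ R̂(w)} (α̂(λ) + 1)/α̂(λ) · ∏_{β̂ ∈ R̂_+ ∖ R̂(w)} (β̂(λ) − 1)/β̂(λ) · ∏_{γ̂ ∈ R̂(w)} ρ(γ̂(λ))/ρ(γ̂(λ) + 1). -/

import Mathlib

open scoped RealInnerProductSpace Classical

/-- A reduced crystallographic root system in `V = EuclideanSpace ℝ (Fin n)`, with a fixed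
positive system.  `W` acts on `V`, hence on coroots, and is extended complex-linearly to
the complexification `V_ℂ = Fin n → ℂ`. -/
structure RootData (n : ℕ) where
  roots : Finset (EuclideanSpace ℝ (Fin n))
  pos : Finset (EuclideanSpace ℝ (Fin n))
  pos_subset : pos ⊆ roots
  ne_zero : ∀ a ∈ roots, a ≠ 0
  union_eq : roots = pos ∪ pos.image (fun a => -a)
  pos_neg_disj : ∀ a ∈ pos, -a ∉ pos
  reduced : ∀ a ∈ roots, ∀ t : ℝ, t • a ∈ roots → t = 1 ∨ t = -1
  crystallographic : ∀ a ∈ roots, ∀ b ∈ roots, ∃ k : ℤ, 2 * ⟪a, b⟫ / ⟪a, a⟫ = (k : ℝ)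
  refl_mem : ∀ a ∈ roots, ∀ b ∈ roots, b - (2 * ⟪a, b⟫ / ⟪a, a⟫) • a ∈ roots

namespace RootData

variable {n : ℕ}

/-- The Weyl group `W`, generated by the orthogonal reflections in the roots. -/
noncomputable def weyl (S : RootData n) :
    Subgroup (EuclideanSpace ℝ (Fin n) ≃ₗ[ℝ] EuclideanSpace ℝ (Fin n)) :=
  Subgroup.closure {g | ∃ a ∈ S.roots, ∀ v, g v = v - (2 * ⟪a, v⟫ / ⟪a, a⟫) • a}

/-- The coroot `α̂ := 2α/(α,α)` of a root `α`. -/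
noncomputable def co (a : EuclideanSpace ℝ (Fin n)) : EuclideanSpace ℝ (Fin n) :=
  (2 / ⟪a, a⟫) • a

/-- Evaluation of a coroot (as a linear functional via the inner product), extended
`ℂ`-linearly to the complexification `V_ℂ = Fin n → ℂ`. -/
noncomputable def ev (a : EuclideanSpace ℝ (Fin n)) (l : Fin n → ℂ) : ℂ :=
  ∑ i, (a i : ℂ) * l i

/-- The `ℂ`-linear extension of `w : V ≃ₗ[ℝ] V` to the complexification `V_ℂ`. -/
noncomputable def cpx (w : EuclideanSpace ℝ (Fin n) ≃ₗ[ℝ] EuclideanSpace ℝ (Fin n))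
    (l : Fin n → ℂ) : Fin n → ℂ :=
  fun i => ∑ j, ((w (EuclideanSpace.single j 1)) i : ℂ) * l j

/-- The inversion set `R̂(w) = {α̂ ∈ R̂₊ : w(α̂) ∈ R̂₋}` (indexed by the positive roots
`α` with `w(α)` negative, which correspond bijectively to the coroots in question). -/
noncomputable def invSet (S : RootData n)
    (w : EuclideanSpace ℝ (Fin n) ≃ₗ[ℝ] EuclideanSpace ℝ (Fin n)) :
    Finset (EuclideanSpace ℝ (Fin n)) :=
  S.pos.filter fun a => w a ∈ S.pos.image (fun b => -b)

/-- `c(λ) := ∏_{α ∈ R₊} (α̂(λ) + 1)/α̂(λ)`. -/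
noncomputable def cfun (S : RootData n) (l : Fin n → ℂ) : ℂ :=
  ∏ a ∈ S.pos, (ev (co a) l + 1) / ev (co a) l

/-- `r(λ) := ∏_{α ∈ R₊} ρ(α̂(λ))`. -/
noncomputable def rfun (S : RootData n) (ρ : ℂ → ℂ) (l : Fin n → ℂ) : ℂ :=
  ∏ a ∈ S.pos, ρ (ev (co a) l)

end RootData

open RootData

namespace StatementAux

variable {n : ℕ}

lemma ev_neg_left (a : EuclideanSpace ℝ (Fin n)) (l : Fin n → ℂ) :
    ev (-a) l = - ev a l := by
  unfold ev
  rw [← Finset.sum_neg_distrib]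
  refine Finset.sum_congr rfl fun i _ => ?_
  have : (-a) i = -(a i) := rfl
  rw [this]; push_cast; ring

lemma ev_neg_right (a : EuclideanSpace ℝ (Fin n)) (l : Fin n → ℂ) :
    ev a (-l) = - ev a l := by
  unfold ev
  rw [← Finset.sum_neg_distrib]
  refine Finset.sum_congr rfl fun i _ => ?_
  have : (-l) i = -(l i) := rfl
  rw [this]; ring

lemma co_neg (a : EuclideanSpace ℝ (Fin n)) : co (-a) = - co a := by
  unfold co
  rw [inner_neg_neg, smul_neg]

lemma co_map (w : EuclideanSpace ℝ (Fin n) ≃ₗ[ℝ] EuclideanSpace ℝ (Fin n))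
    (horth : ∀ u v : EuclideanSpace ℝ (Fin n), ⟪w u, w v⟫ = ⟪u, v⟫)
    (a : EuclideanSpace ℝ (Fin n)) : co (w a) = w (co a) := by
  unfold co
  rw [horth a a, map_smul]

lemma ev_cpx (w : EuclideanSpace ℝ (Fin n) ≃ₗ[ℝ] EuclideanSpace ℝ (Fin n))
    (horth : ∀ u v : EuclideanSpace ℝ (Fin n), ⟪w u, w v⟫ = ⟪u, v⟫)
    (b : EuclideanSpace ℝ (Fin n)) (l : Fin n → ℂ) :
    ev (w b) (cpx w l) = ev b l := by
  unfold ev cpx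
  have key : ∀ j, ∑ i, ((w b) i : ℂ) * ((w (EuclideanSpace.single j 1)) i : ℂ) = (b j : ℂ) := by
    intro j
    have h2 : ⟪w b, w (EuclideanSpace.single j 1)⟫ = b j := by
      rw [horth]; simp [PiLp.inner_apply, EuclideanSpace.single_apply]
    calc ∑ i, ((w b) i : ℂ) * ((w (EuclideanSpace.single j 1)) i : ℂ)
        = ((∑ i, (w b) i * (w (EuclideanSpace.single j 1)) i : ℝ) : ℂ) := by push_cast; ring
      _ = ((⟪w b, w (EuclideanSpace.single j 1)⟫ : ℝ) : ℂ) := by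
          rw [PiLp.inner_apply]; norm_num [RCLike.inner_apply]
          exact Finset.sum_congr rfl fun x _ => mul_comm _ _
      _ = (b j : ℂ) := by rw [h2]
  calc ∑ i, ((w b) i : ℂ) * ∑ j, ((w (EuclideanSpace.single j 1)) i : ℂ) * l j
      = ∑ i, ∑ j, ((w b) i : ℂ) * ((w (EuclideanSpace.single j 1)) i : ℂ) * l j := by
        refine Finset.sum_congr rfl fun i _ => ?_
        rw [Finset.mul_sum]
        refine Finset.sum_congr rfl fun j _ => by ring
    _ = ∑ j, ∑ i, ((w b) i : ℂ) * ((w (EuclideanSpace.single j 1)) i : ℂ) * l j :=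
        Finset.sum_comm
    _ = ∑ j, (∑ i, ((w b) i : ℂ) * ((w (EuclideanSpace.single j 1)) i : ℂ)) * l j := by
        refine Finset.sum_congr rfl fun j _ => ?_
        rw [Finset.sum_mul]
    _ = ∑ j, (b j : ℂ) * l j := by
        refine Finset.sum_congr rfl fun j _ => by rw [key]

lemma symm_roots (S : RootData n) (g : EuclideanSpace ℝ (Fin n) ≃ₗ[ℝ] EuclideanSpace ℝ (Fin n))
    (h : ∀ a ∈ S.roots, g a ∈ S.roots) : ∀ b ∈ S.roots, g.symm b ∈ S.roots := by
  have himg : S.roots.image (fun a => g a) = S.roots := by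
    apply Finset.eq_of_subset_of_card_le
    · intro b hb; simp only [Finset.mem_image] at hb; obtain ⟨a, ha, rfl⟩ := hb; exact h a ha
    · rw [Finset.card_image_of_injective _ g.injective]
  intro b hb
  rw [← himg] at hb
  simp only [Finset.mem_image] at hb
  obtain ⟨a, ha, rfl⟩ := hb
  rw [g.symm_apply_apply]; exact ha

lemma weyl_key (S : RootData n) {g : EuclideanSpace ℝ (Fin n) ≃ₗ[ℝ] EuclideanSpace ℝ (Fin n)}
    (hg : g ∈ S.weyl) :
    (∀ u v : EuclideanSpace ℝ (Fin n), ⟪g u, g v⟫ = ⟪u, v⟫) ∧ (∀ a ∈ S.roots, g a ∈ S.roots) := by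
  unfold weyl at hg
  induction hg using Subgroup.closure_induction with
  | mem x hx =>
      obtain ⟨a, ha, hfa⟩ := hx
      have hane : a ≠ 0 := S.ne_zero a ha
      have hinner : ⟪a, a⟫ ≠ 0 := fun h => hane (inner_self_eq_zero.mp h)
      constructor
      · intro u v
        rw [hfa u, hfa v]
        simp only [inner_sub_left, inner_sub_right, real_inner_smul_left, real_inner_smul_right]
        rw [div_mul_cancel₀ _ hinner, real_inner_comm u a]
        ring
      · intro b hb
        rw [hfa b]
        exact S.refl_mem a ha b hb
  | one => exact ⟨fun u v => rfl, fun a ha => ha⟩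
  | mul x y hx hy ihx ihy =>
      refine ⟨fun u v => ?_, fun a ha => ?_⟩
      · show ⟪x (y u), x (y v)⟫ = ⟪u, v⟫
        rw [ihx.1, ihy.1]
      · show x (y a) ∈ S.roots
        exact ihx.2 _ (ihy.2 a ha)
  | inv x hx ihx =>
      refine ⟨fun u v => ?_, fun a ha => ?_⟩
      · show ⟪x.symm u, x.symm v⟫ = ⟪u, v⟫
        conv_rhs => rw [← x.apply_symm_apply u, ← x.apply_symm_apply v]
        rw [ihx.1]
      · show x.symm a ∈ S.roots
        exact symm_roots S x ihx.2 a ha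

end StatementAux

open StatementAux

theorem statement8 (n : ℕ) (S : RootData n) (ρ : ℂ → ℂ) (hρ : ∀ s : ℂ, ρ s = ρ (1 - s))
    (w : EuclideanSpace ℝ (Fin n) ≃ₗ[ℝ] EuclideanSpace ℝ (Fin n)) (hw : w ∈ S.weyl)
    (l : Fin n → ℂ)
    (h0 : ∀ a ∈ S.roots, ev (co a) l ≠ 0)
    (hρ0 : ∀ a ∈ S.roots, ρ (ev (co a) l) ≠ 0) :
    cfun S (-(cpx w l)) * (rfun S ρ l / rfun S ρ (cpx w l)) =
      (∏ a ∈ invSet S w, (ev (co a) l + 1) / ev (co a) l) *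
      (∏ a ∈ S.pos \ invSet S w, (ev (co a) l - 1) / ev (co a) l) *
      (∏ a ∈ invSet S w, ρ (ev (co a) l) / ρ (ev (co a) l + 1)) := by
  obtain ⟨horth, hroots⟩ := weyl_key S hw
  have hsymm : ∀ b ∈ S.roots, w.symm b ∈ S.roots := symm_roots S w hroots
  -- the evaluation identities
  have hEv : ∀ a, ev (co (w a)) (cpx w l) = ev (co a) l := by
    intro a; rw [co_map w horth, ev_cpx w horth]
  have hEvNeg : ∀ a, ev (co (-(w a))) (cpx w l) = - ev (co a) l := by
    intro a; rw [co_neg, ev_neg_left, hEv]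
  -- the bijection
  set φ : EuclideanSpace ℝ (Fin n) → EuclideanSpace ℝ (Fin n) :=
    fun a => if w a ∈ S.pos.image (fun b => -b) then -(w a) else w a with hφdef
  set ψ : EuclideanSpace ℝ (Fin n) → EuclideanSpace ℝ (Fin n) :=
    fun b => if w.symm b ∈ S.pos then w.symm b else -(w.symm b) with hψdef
  have hposimg : ∀ {x : EuclideanSpace ℝ (Fin n)},
      x ∈ S.pos.image (fun b => -b) → -x ∈ S.pos := by
    intro x hx
    simp only [Finset.mem_image] at hx
    obtain ⟨b, hb, rfl⟩ := hx
    rwa [neg_neg]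
  have hnotimg : ∀ {x : EuclideanSpace ℝ (Fin n)}, x ∈ S.pos →
      x ∉ S.pos.image (fun b => -b) := by
    intro x hx hmem
    exact S.pos_neg_disj _ (hposimg hmem) (by rwa [neg_neg])
  have hrootsplit : ∀ {x : EuclideanSpace ℝ (Fin n)}, x ∈ S.roots →
      x ∉ S.pos.image (fun b => -b) → x ∈ S.pos := by
    intro x hx hnot
    rw [S.union_eq, Finset.mem_union] at hx
    tauto
  have hφ : ∀ a ∈ S.pos, φ a ∈ S.pos := by
    intro a ha
    by_cases hc : w a ∈ S.pos.image (fun b => -b)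
    · simp only [hφdef, if_pos hc]; exact hposimg hc
    · simp only [hφdef, if_neg hc]
      exact hrootsplit (hroots a (S.pos_subset ha)) hc
  have hψ : ∀ b ∈ S.pos, ψ b ∈ S.pos := by
    intro b hb
    by_cases hc : w.symm b ∈ S.pos
    · simp only [hψdef, if_pos hc]; exact hc
    · simp only [hψdef, if_neg hc]
      have h1 : w.symm b ∈ S.roots := hsymm b (S.pos_subset hb)
      rw [S.union_eq, Finset.mem_union] at h1
      rcases h1 with h1 | h1
      · exact absurd h1 hc
      · exact hposimg h1
  have hψφ : ∀ a ∈ S.pos, ψ (φ a) = a := by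
    intro a ha
    by_cases hc : w a ∈ S.pos.image (fun b => -b)
    · simp only [hφdef, hψdef, if_pos hc]
      have h1 : w.symm (-(w a)) = -a := by rw [map_neg, w.symm_apply_apply]
      rw [h1, if_neg (S.pos_neg_disj a ha), neg_neg]
    · simp only [hφdef, hψdef, if_neg hc]
      rw [w.symm_apply_apply, if_pos ha]
  have hφψ : ∀ b ∈ S.pos, φ (ψ b) = b := by
    intro b hb
    by_cases hc : w.symm b ∈ S.pos
    · simp only [hψdef, hφdef, if_pos hc]
      rw [w.apply_symm_apply, if_neg (hnotimg hb)]
    · simp only [hψdef, hφdef, if_neg hc]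
      have h1 : w (-(w.symm b)) = -b := by rw [map_neg, w.apply_symm_apply]
      rw [h1]
      have h2 : -b ∈ S.pos.image (fun c => -c) := Finset.mem_image_of_mem _ hb
      rw [if_pos h2, neg_neg]
  -- product reindexing for cfun
  have hcfun : cfun S (-(cpx w l)) =
      ∏ a ∈ S.pos, (if w a ∈ S.pos.image (fun b => -b)
        then (ev (co a) l + 1) / ev (co a) l else (ev (co a) l - 1) / ev (co a) l) := by
    unfold cfun
    refine (Finset.prod_nbij' φ ψ hφ hψ hψφ hφψ ?_).symm
    intro a ha
    by_cases hc : w a ∈ S.pos.image (fun b => -b)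
    · rw [if_pos hc]
      simp only [hφdef, if_pos hc]
      rw [ev_neg_right, hEvNeg, neg_neg]
    · rw [if_neg hc]
      simp only [hφdef, if_neg hc]
      rw [ev_neg_right, hEv]
      rw [div_eq_div_iff (by simpa using h0 a (S.pos_subset ha)) (neg_ne_zero.mpr (h0 a (S.pos_subset ha)))]
      ring
  -- product reindexing for rfun ∘ w
  have hrfunw : rfun S ρ (cpx w l) =
      ∏ a ∈ S.pos, (if w a ∈ S.pos.image (fun b => -b) then ρ (ev (co a) l + 1) else ρ (ev (co a) l)) := by
    unfold rfun
    refine (Finset.prod_nbij' φ ψ hφ hψ hψφ hφψ ?_).symm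
    intro a ha
    by_cases hc : w a ∈ S.pos.image (fun b => -b)
    · rw [if_pos hc]
      simp only [hφdef, if_pos hc]
      rw [hEvNeg]
      rw [hρ (-(ev (co a) l))]
      ring_nf
    · rw [if_neg hc]
      simp only [hφdef, if_neg hc]
      rw [hEv]
  -- splitting the products over the inversion set
  have hIsub : invSet S w ⊆ S.pos := Finset.filter_subset _ _
  have hsplit : ∀ f : EuclideanSpace ℝ (Fin n) → ℂ,
      ∏ a ∈ S.pos, f a = (∏ a ∈ S.pos \ invSet S w, f a) * ∏ a ∈ invSet S w, f a :=
    fun f => (Finset.prod_sdiff hIsub).symm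
  have hmemI : ∀ a ∈ invSet S w, w a ∈ S.pos.image (fun b => -b) := by
    intro a ha; exact (Finset.mem_filter.mp ha).2
  have hmemD : ∀ a ∈ S.pos \ invSet S w, w a ∉ S.pos.image (fun b => -b) := by
    intro a ha
    rw [Finset.mem_sdiff] at ha
    intro hc
    exact ha.2 (Finset.mem_filter.mpr ⟨ha.1, hc⟩)
  -- abbreviations
  set I := invSet S w
  set D := S.pos \ invSet S w
  have hc2 : cfun S (-(cpx w l)) =
      (∏ a ∈ D, (ev (co a) l - 1) / ev (co a) l) * ∏ a ∈ I, (ev (co a) l + 1) / ev (co a) l := by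
    rw [hcfun, hsplit]
    congr 1
    · exact Finset.prod_congr rfl fun a ha => if_neg (hmemD a ha)
    · exact Finset.prod_congr rfl fun a ha => if_pos (hmemI a ha)
  have hr2 : rfun S ρ (cpx w l) = (∏ a ∈ D, ρ (ev (co a) l)) * ∏ a ∈ I, ρ (ev (co a) l + 1) := by
    rw [hrfunw, hsplit]
    congr 1
    · exact Finset.prod_congr rfl fun a ha => if_neg (hmemD a ha)
    · exact Finset.prod_congr rfl fun a ha => if_pos (hmemI a ha)
  have hr1 : rfun S ρ l = (∏ a ∈ D, ρ (ev (co a) l)) * ∏ a ∈ I, ρ (ev (co a) l) := by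
    unfold rfun; rw [hsplit]
  -- nonvanishing
  have hD0 : (∏ a ∈ D, ρ (ev (co a) l)) ≠ 0 := by
    rw [Finset.prod_ne_zero_iff]
    intro a ha
    exact hρ0 a (S.pos_subset (Finset.mem_sdiff.mp ha).1)
  have hQ0 : (∏ a ∈ I, ρ (ev (co a) l + 1)) ≠ 0 := by
    rw [Finset.prod_ne_zero_iff]
    intro a ha
    have hap : a ∈ S.pos := hIsub ha
    have hna : -a ∈ S.roots := by
      rw [S.union_eq, Finset.mem_union]
      exact Or.inr (Finset.mem_image_of_mem _ hap)
    have h1 : ρ (ev (co a) l + 1) = ρ (ev (co (-a)) l) := by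
      rw [co_neg, ev_neg_left, hρ (ev (co a) l + 1)]
      ring_nf
    rw [h1]
    exact hρ0 _ hna
  -- final algebra
  rw [hc2, hr2, hr1]
  have hdistrib : (∏ a ∈ I, ρ (ev (co a) l) / ρ (ev (co a) l + 1)) =
      (∏ a ∈ I, ρ (ev (co a) l)) / ∏ a ∈ I, ρ (ev (co a) l + 1) :=
    Finset.prod_div_distrib _ _
  rw [hdistrib]
  have key : ((∏ a ∈ D, ρ (ev (co a) l)) * ∏ a ∈ I, ρ (ev (co a) l)) /
      ((∏ a ∈ D, ρ (ev (co a) l)) * ∏ a ∈ I, ρ (ev (co a) l + 1)) =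
      (∏ a ∈ I, ρ (ev (co a) l)) / ∏ a ∈ I, ρ (ev (co a) l + 1) :=
    mul_div_mul_left _ _ hD0
  rw [key]
  ring
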